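/- Let β₀ ∈ (0,1). For a positive real x and t > 0, sup_{a ∈ ℝ} ∫₀ᵗ s^{-β₀} e^{-|s+a| x} ds ≤ C (1 + t^{1-β₀}) / (1 + x^{1-β₀}) for some constant C depending only on β₀. -/

import Mathlib

open MeasureTheory Real

lemma aux_rpow_integrableOn {β₀ : ℝ} (h1 : β₀ < 1) {r : ℝ} (hr : 0 < r) :
    IntegrableOn (fun s : ℝ => s ^ (-β₀)) (Set.Ioc (0:ℝ) r) := by
  have := intervalIntegral.intervalIntegrable_rpow' (a := 0) (b := r)
    (show (-1:ℝ) < -β₀ by linarith)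
  rwa [intervalIntegrable_iff_integrableOn_Ioc_of_le hr.le] at this

lemma aux_rpow_integral {β₀ : ℝ} (h1 : β₀ < 1) {r : ℝ} (hr : 0 < r) :
    (∫ s in Set.Ioc (0:ℝ) r, s ^ (-β₀)) = r ^ (1 - β₀) / (1 - β₀) := by
  rw [← intervalIntegral.integral_of_le hr.le,
    integral_rpow (Or.inl (show (-1:ℝ) < -β₀ by linarith)),
    Real.zero_rpow (show -β₀ + 1 ≠ 0 by intro h; linarith), show -β₀ + 1 = 1 - β₀ by ring,
    sub_zero]

lemma aux_exp_abs_integrable {x : ℝ} (hx : 0 < x) :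
    Integrable (fun u : ℝ => Real.exp (-(|u| * x))) := by
  have int_Ioi : IntegrableOn (fun u : ℝ => Real.exp (-(|u| * x))) (Set.Ioi 0) := by
    refine (exp_neg_integrableOn_Ioi 0 hx).congr_fun (fun u hu => ?_) measurableSet_Ioi
    rw [abs_of_pos (show (0:ℝ) < u from hu)]; ring_nf
  have int_Iic : IntegrableOn (fun u : ℝ => Real.exp (-(|u| * x))) (Set.Iic 0) := by
    rw [← Measure.map_neg_eq_self (volume : Measure ℝ)]
    have m : MeasurableEmbedding fun u : ℝ => -u := (Homeomorph.neg ℝ).measurableEmbedding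
    rw [m.integrableOn_map_iff]
    simp_rw [Function.comp_def, abs_neg, Set.neg_preimage, Set.neg_Iic, neg_zero]
    exact Iff.mpr integrableOn_Ici_iff_integrableOn_Ioi int_Ioi
  rw [← integrableOn_univ, ← Set.Iic_union_Ioi (a := (0:ℝ))]
  exact int_Iic.union int_Ioi

lemma aux_exp_abs_integral {x : ℝ} (hx : 0 < x) :
    (∫ u : ℝ, Real.exp (-(|u| * x))) = 2 / x := by
  have h1 := integral_comp_abs (f := fun u : ℝ => Real.exp (-(u * x)))
  rw [h1, integral_comp_mul_right_Ioi (fun u => Real.exp (-u)) 0 hx]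
  simp [integral_exp_neg_Ioi_zero, integral_exp_Iic_zero, smul_eq_mul]
  rw [div_eq_mul_inv, mul_comm]

theorem stmt11 (β₀ : ℝ) (hβ : β₀ ∈ Set.Ioo (0:ℝ) 1) :
    ∃ C > (0:ℝ), ∀ x > (0:ℝ), ∀ t > (0:ℝ), ∀ a : ℝ,
      (∫ s in Set.Ioc (0:ℝ) t, s ^ (-β₀) * Real.exp (-(|s + a| * x)))
        ≤ C * (1 + t ^ (1 - β₀)) / (1 + x ^ (1 - β₀)) := by
  obtain ⟨hβ0, hβ1⟩ := hβ
  have hb : (0:ℝ) < 1 - β₀ := by linarith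
  refine ⟨1/(1-β₀) + 2, by positivity, ?_⟩
  intro x hx t ht a
  have hx0 : (0:ℝ) < x⁻¹ := by positivity
  set f : ℝ → ℝ := fun s => s ^ (-β₀) * Real.exp (-(|s + a| * x)) with hfdef
  have hshift : Integrable (fun s : ℝ => Real.exp (-(|s + a| * x))) :=
    (aux_exp_abs_integrable hx).comp_add_right a
  have hexp_nonneg : ∀ s : ℝ, 0 ≤ Real.exp (-(|s + a| * x)) := fun s => (Real.exp_pos _).le
  have hexp_le_one : ∀ s : ℝ, Real.exp (-(|s + a| * x)) ≤ 1 := by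
    intro s
    rw [← Real.exp_zero]
    exact Real.exp_le_exp.mpr (neg_nonpos.mpr (by positivity))
  have hfg1 : ∀ s ∈ Set.Ioc (0:ℝ) t, f s ≤ s ^ (-β₀) := by
    intro s hs
    calc f s ≤ s ^ (-β₀) * 1 :=
          mul_le_mul_of_nonneg_left (hexp_le_one s) (rpow_nonneg hs.1.le _)
      _ = s ^ (-β₀) := mul_one _
  have hf_int : IntegrableOn f (Set.Ioc 0 t) := by
    have hcont : ContinuousOn f (Set.Ioc (0:ℝ) t) := by
      refine ContinuousOn.mul (continuousOn_id.rpow_const (fun s hs => Or.inl hs.1.ne')) ?_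
      exact (Real.continuous_exp.comp
        (((continuous_id.add continuous_const).abs.mul continuous_const).neg)).continuousOn
    refine Integrable.mono (aux_rpow_integrableOn hβ1 ht)
      (hcont.aestronglyMeasurable measurableSet_Ioc) ?_
    filter_upwards [ae_restrict_mem measurableSet_Ioc] with s hs
    rw [Real.norm_eq_abs, Real.norm_eq_abs,
      abs_of_nonneg (mul_nonneg (rpow_nonneg hs.1.le _) (hexp_nonneg s))]
    exact (hfg1 s hs).trans (le_abs_self _)
  -- Bound A
  have hA : (∫ s in Set.Ioc (0:ℝ) t, f s) ≤ t ^ (1 - β₀) / (1 - β₀) := by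
    rw [← aux_rpow_integral hβ1 ht]
    exact setIntegral_mono_on hf_int (aux_rpow_integrableOn hβ1 ht) measurableSet_Ioc hfg1
  -- Bound B
  have hind_int : Integrable ((Set.Ioc (0:ℝ) x⁻¹).indicator (fun s : ℝ => s ^ (-β₀))) := by
    rw [integrable_indicator_iff measurableSet_Ioc]
    exact aux_rpow_integrableOn hβ1 hx0
  set g : ℝ → ℝ := fun s =>
    (Set.Ioc (0:ℝ) x⁻¹).indicator (fun s : ℝ => s ^ (-β₀)) s
      + x ^ β₀ * Real.exp (-(|s + a| * x)) with hgdef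
  have hg_int : IntegrableOn g (Set.Ioc 0 t) :=
    (hind_int.add (hshift.const_mul _)).integrableOn
  have hfg : ∀ s ∈ Set.Ioc (0:ℝ) t, f s ≤ g s := by
    intro s hs
    by_cases hsx : s ≤ x⁻¹
    · have h1 : (Set.Ioc (0:ℝ) x⁻¹).indicator (fun s : ℝ => s ^ (-β₀)) s = s ^ (-β₀) :=
        Set.indicator_of_mem (Set.mem_Ioc.mpr ⟨hs.1, hsx⟩) fun s => s ^ (-β₀)
      have h3 : (0:ℝ) ≤ x ^ β₀ * Real.exp (-(|s + a| * x)) := by positivity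
      have := hfg1 s hs
      simp only [hgdef, h1]
      linarith
    · have h1 : (Set.Ioc (0:ℝ) x⁻¹).indicator (fun s : ℝ => s ^ (-β₀)) s = 0 :=
        Set.indicator_of_notMem (fun hmem => hsx hmem.2) _
      have h2 : s ^ (-β₀) ≤ x ^ β₀ := by
        have h := Real.rpow_le_rpow_of_nonpos hx0 (le_of_not_ge hsx) (by linarith : -β₀ ≤ 0)
        rwa [Real.inv_rpow hx.le, ← Real.rpow_neg hx.le, neg_neg] at h
      have h4 : f s ≤ x ^ β₀ * Real.exp (-(|s + a| * x)) :=
        mul_le_mul_of_nonneg_right h2 (hexp_nonneg s)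
      simp only [hgdef, h1]
      linarith
  have hB : (∫ s in Set.Ioc (0:ℝ) t, f s) ≤ (1/(1-β₀) + 2) * x ^ (-(1 - β₀)) := by
    have step1 : (∫ s in Set.Ioc (0:ℝ) t, f s) ≤ ∫ s in Set.Ioc (0:ℝ) t, g s :=
      setIntegral_mono_on hf_int hg_int measurableSet_Ioc hfg
    have step2 : (∫ s in Set.Ioc (0:ℝ) t, g s)
        = (∫ s in Set.Ioc (0:ℝ) t, (Set.Ioc (0:ℝ) x⁻¹).indicator (fun s : ℝ => s ^ (-β₀)) s)
          + ∫ s in Set.Ioc (0:ℝ) t, x ^ β₀ * Real.exp (-(|s + a| * x)) :=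
      integral_add hind_int.integrableOn (hshift.const_mul _).integrableOn
    have step3 : (∫ s in Set.Ioc (0:ℝ) t,
          (Set.Ioc (0:ℝ) x⁻¹).indicator (fun s : ℝ => s ^ (-β₀)) s)
        ≤ (x⁻¹) ^ (1 - β₀) / (1 - β₀) := by
      calc (∫ s in Set.Ioc (0:ℝ) t,
            (Set.Ioc (0:ℝ) x⁻¹).indicator (fun s : ℝ => s ^ (-β₀)) s)
          ≤ ∫ s : ℝ, (Set.Ioc (0:ℝ) x⁻¹).indicator (fun s : ℝ => s ^ (-β₀)) s :=
            setIntegral_le_integral hind_int (by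
              filter_upwards with s
              exact Set.indicator_nonneg (fun u hu => rpow_nonneg hu.1.le _) s)
        _ = ∫ s in Set.Ioc (0:ℝ) x⁻¹, s ^ (-β₀) := integral_indicator measurableSet_Ioc
        _ = (x⁻¹) ^ (1 - β₀) / (1 - β₀) := aux_rpow_integral hβ1 hx0
    have step4 : (∫ s in Set.Ioc (0:ℝ) t, x ^ β₀ * Real.exp (-(|s + a| * x)))
        ≤ x ^ β₀ * (2 / x) := by
      rw [integral_const_mul]
      refine mul_le_mul_of_nonneg_left ?_ (rpow_nonneg hx.le _)
      calc (∫ s in Set.Ioc (0:ℝ) t, Real.exp (-(|s + a| * x)))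
          ≤ ∫ s : ℝ, Real.exp (-(|s + a| * x)) :=
            setIntegral_le_integral hshift (by filter_upwards with s using hexp_nonneg s)
        _ = ∫ u : ℝ, Real.exp (-(|u| * x)) := integral_add_right_eq_self (fun u : ℝ => Real.exp (-(|u| * x))) a
        _ = 2 / x := aux_exp_abs_integral hx
    have e1 : (x⁻¹) ^ (1 - β₀) = x ^ (-(1 - β₀)) := by
      rw [Real.inv_rpow hx.le, ← Real.rpow_neg hx.le]
    have e2 : x ^ β₀ * (2 / x) = 2 * x ^ (-(1 - β₀)) := by
      rw [show -(1-β₀) = β₀ - 1 by ring, Real.rpow_sub hx, Real.rpow_one]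
      ring
    calc (∫ s in Set.Ioc (0:ℝ) t, f s)
        ≤ (∫ s in Set.Ioc (0:ℝ) t,
            (Set.Ioc (0:ℝ) x⁻¹).indicator (fun s : ℝ => s ^ (-β₀)) s)
          + ∫ s in Set.Ioc (0:ℝ) t, x ^ β₀ * Real.exp (-(|s + a| * x)) := step2 ▸ step1
      _ ≤ (x⁻¹) ^ (1 - β₀) / (1 - β₀) + x ^ β₀ * (2 / x) := add_le_add step3 step4
      _ = (1/(1-β₀) + 2) * x ^ (-(1 - β₀)) := by rw [e1, e2]; ring
  -- combine
  have hxb : (0:ℝ) < x ^ (1 - β₀) := rpow_pos_of_pos hx _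
  have htb : (0:ℝ) ≤ t ^ (1 - β₀) := rpow_nonneg ht.le _
  rw [le_div_iff₀ (by positivity : (0:ℝ) < 1 + x ^ (1 - β₀))]
  have hxinv : x ^ (-(1 - β₀)) * x ^ (1 - β₀) = 1 := by
    rw [← Real.rpow_add hx]; simp
  have hB2 : (∫ s in Set.Ioc (0:ℝ) t, f s) * x ^ (1 - β₀) ≤ 1/(1-β₀) + 2 := by
    calc (∫ s in Set.Ioc (0:ℝ) t, f s) * x ^ (1 - β₀)
        ≤ ((1/(1-β₀) + 2) * x ^ (-(1 - β₀))) * x ^ (1 - β₀) :=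
          mul_le_mul_of_nonneg_right hB hxb.le
      _ = 1/(1-β₀) + 2 := by rw [mul_assoc, hxinv, mul_one]
  have hdiv : t ^ (1 - β₀) / (1 - β₀) ≤ (1/(1-β₀) + 2) * t ^ (1 - β₀) := by
    rw [div_eq_inv_mul, ← one_div]
    exact mul_le_mul_of_nonneg_right (by linarith) htb
  nlinarith [hA, hB2, hdiv]
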